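/- Let h = 0112122122212222⋯ be the fixed point beginning with 0 of the morphism μ on {0,1,2}* given by μ(0) = 01, μ(1) = 12, μ(2) = 2. Then the 3-binomial complexity of h equals its factor complexity: b^(3)_h(n) = p_h(n) for all n ≥ 0. -/

import Mathlib

/-- The number of occurrences of `w` as a (scattered) subword of `u`:
the binomial coefficient of the words `u` and `w`. -/
def wordBinom {A : Type*} [DecidableEq A] (u w : List A) : ℕ := u.sublists.count w

/-- `k`-binomial equivalence of finite words: all binomial coefficients with respect to
words of length at most `k` agree. -/
def BinEquiv {A : Type*} [DecidableEq A] (k : ℕ) (u v : List A) : Prop :=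
  ∀ x : List A, x.length ≤ k → wordBinom u x = wordBinom v x

/-- `k`-binomial equivalence as a setoid. -/
def binSetoid (A : Type*) [DecidableEq A] (k : ℕ) : Setoid (List A) where
  r := BinEquiv k
  iseqv := ⟨fun _ _ _ => rfl, fun h x hx => (h x hx).symm,
    fun h h' x hx => (h x hx).trans (h' x hx)⟩

/-- `u` occurs in the infinite word `x` at position `i`. -/
def OccursAt {A : Type*} (u : List A) (x : ℕ → A) (i : ℕ) : Prop :=
  u = (List.range u.length).map (fun j => x (i + j))

/-- `u` is a factor of the infinite word `x`. -/
def FactorOf {A : Type*} (u : List A) (x : ℕ → A) : Prop := ∃ i, OccursAt u x i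

/-- The set of length-`n` factors of `x`. -/
def Fac {A : Type*} (x : ℕ → A) (n : ℕ) : Set (List A) :=
  {u | u.length = n ∧ FactorOf u x}

/-- Factor complexity of an infinite word. -/
noncomputable def fc {A : Type*} (x : ℕ → A) (n : ℕ) : ℕ := (Fac x n).ncard

/-- `k`-binomial complexity of an infinite word: the number of `k`-binomial equivalence
classes of length-`n` factors. -/
noncomputable def bc {A : Type*} [DecidableEq A] (x : ℕ → A) (k n : ℕ) : ℕ :=
  (Quotient.mk (binSetoid A k) '' Fac x n).ncard

/-- Application of a morphism (given by the images of letters) to a finite word. -/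
def mAp {A B : Type*} (f : A → List B) (u : List A) : List B := (u.map f).flatten

/-- A morphism is Parikh-collinear if the Parikh vectors of images of letters are
pairwise rationally collinear. -/
def ParikhCollinear {A B : Type*} [DecidableEq B] (f : A → List B) : Prop :=
  ∀ a b : A, ∃ r : ℚ, ∀ c : B, ((f b).count c : ℚ) = r * ((f a).count c)

/-- Length-`n` prefix of an infinite word. -/
def pre {A : Type*} (x : ℕ → A) (n : ℕ) : List A := (List.range n).map x

/-- `z` is the image of the infinite word `x` under the morphism `f`, and this image
is an infinite word: images of prefixes of `x` are prefixes of `z`, of unbounded length. -/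
def InfMapsTo {A B : Type*} (f : A → List B) (x : ℕ → A) (z : ℕ → B) : Prop :=
  (∀ n, mAp f (pre x n) = pre z (mAp f (pre x n)).length) ∧
  (∀ m, ∃ n, m ≤ (mAp f (pre x n)).length)

/-- The morphism `μ : 0 ↦ 01, 1 ↦ 12, 2 ↦ 2`. -/
def mu : Fin 3 → List (Fin 3) :=
  fun a => if a = 0 then [0, 1] else if a = 1 then [1, 2] else [2]

section Dev
open List

lemma wb_perm (u w : List (Fin 3)) : wordBinom u w = u.sublists'.count w := by
  unfold wordBinom
  rw [List.count_eq_countP, List.count_eq_countP]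
  exact (List.sublists_perm_sublists' u).countP_eq _

lemma count_map_cons (a : Fin 3) (w : List (Fin 3)) (L : List (List (Fin 3))) :
    List.count (a :: w) (L.map (List.cons a)) = L.count w := by
  induction L with
  | nil => rfl
  | cons x L ih => simp [List.count_cons, ih]

lemma wordBinom_cons_cons (a b : Fin 3) (u w : List (Fin 3)) :
    wordBinom (a :: u) (b :: w) = wordBinom u (b :: w) + if b = a then wordBinom u w else 0 := by
  rw [wb_perm, List.sublists'_cons, List.count_append, ← wb_perm]
  congr 1
  by_cases hba : b = a
  · subst hba
    rw [if_pos rfl, count_map_cons, ← wb_perm]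
  · rw [if_neg hba]
    refine List.count_eq_zero.2 ?_
    intro hmem
    rcases List.mem_map.1 hmem with ⟨x, -, hx⟩
    exact hba (by injection hx with h1 h2; exact h1.symm)

lemma wordBinom_cons_nil (a : Fin 3) (u : List (Fin 3)) :
    wordBinom (a :: u) [] = wordBinom u [] := by
  rw [wb_perm, List.sublists'_cons, List.count_append, ← wb_perm]
  have : List.count ([] : List (Fin 3)) (u.sublists'.map (List.cons a)) = 0 := by
    refine List.count_eq_zero.2 ?_
    simp
  omega

lemma wordBinom_nil_right (u : List (Fin 3)) : wordBinom u [] = 1 := by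
  induction u with
  | nil => rfl
  | cons a u ih => rw [wordBinom_cons_nil, ih]

lemma wordBinom_single (u : List (Fin 3)) (c : Fin 3) : wordBinom u [c] = u.count c := by
  induction u with
  | nil => rfl
  | cons a u ih =>
    rw [wordBinom_cons_cons, ih, List.count_cons, wordBinom_nil_right]
    by_cases h : c = a
    · simp [h]
    · simp [h, Ne.symm h]

end Dev

section Dev2
open List

/-- `r`-values: for each occurrence of `1`, the number of non-`1` letters before it. -/
def onesL : List (Fin 3) → List ℕ
  | [] => []
  | a :: u => if a = 1 then 0 :: onesL u else (onesL u).map (· + 1)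

lemma onesL_one (u : List (Fin 3)) : onesL (1 :: u) = 0 :: onesL u := by
  rw [onesL, if_pos rfl]

lemma onesL_two (u : List (Fin 3)) : onesL (2 :: u) = (onesL u).map (· + 1) := by
  rw [onesL, if_neg (by decide)]

lemma sum_map_add_one (l : List ℕ) : (l.map (· + 1)).sum = l.sum + l.length := by
  induction l with
  | nil => simp
  | cons x l ih => simp [ih]; omega

lemma sum_map_sq_add_one (l : List ℕ) :
    ((l.map (· + 1)).map (fun r => r * r)).sum
      = (l.map (fun r => r * r)).sum + 2 * l.sum + l.length := by
  induction l with
  | nil => simp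
  | cons x l ih =>
    simp only [List.map_cons, List.sum_cons, List.length_cons, ih]
    ring

lemma wb1_eq (u : List (Fin 3)) : wordBinom u [1] = (onesL u).length := by
  induction u with
  | nil => rfl
  | cons a u ih =>
    rw [wordBinom_cons_cons, ih, wordBinom_nil_right]
    by_cases h : a = 1
    · subst h; rw [onesL_one]; simp
    · rw [onesL, if_neg h, if_neg (fun hh => h hh.symm)]
      simp

lemma wb21_eq (u : List (Fin 3)) (hu : ∀ c ∈ u, c = 1 ∨ c = 2) :
    wordBinom u [2, 1] = (onesL u).sum := by
  induction u with
  | nil => rfl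
  | cons a u ih =>
    have hu' : ∀ c ∈ u, c = 1 ∨ c = 2 := fun c hc => hu c (mem_cons_of_mem a hc)
    rw [wordBinom_cons_cons, ih hu']
    rcases hu a mem_cons_self with h | h <;> subst h
    · rw [onesL_one, if_neg (by decide)]; simp
    · rw [onesL_two, if_pos rfl, wb1_eq, sum_map_add_one]

lemma wb221_eq (u : List (Fin 3)) (hu : ∀ c ∈ u, c = 1 ∨ c = 2) :
    2 * wordBinom u [2, 2, 1] + wordBinom u [2, 1]
      = ((onesL u).map (fun r => r * r)).sum := by
  induction u with
  | nil => rfl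
  | cons a u ih =>
    have hu' : ∀ c ∈ u, c = 1 ∨ c = 2 := fun c hc => hu c (mem_cons_of_mem a hc)
    rw [wordBinom_cons_cons (w := [2,1]), wordBinom_cons_cons (w := [1])]
    rcases hu a mem_cons_self with h | h <;> subst h
    · rw [onesL_one, if_neg (by decide), if_neg (by decide)]
      simpa using ih hu'
    · rw [onesL_two, if_pos rfl, if_pos rfl, sum_map_sq_add_one, ← ih hu',
        wb21_eq u hu', wb1_eq]
      ring

lemma onesL_inj : ∀ u v : List (Fin 3), (∀ c ∈ u, c = 1 ∨ c = 2) → (∀ c ∈ v, c = 1 ∨ c = 2) →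
    u.length = v.length → onesL u = onesL v → u = v := by
  intro u
  induction u with
  | nil => intro v _ _ hl _; exact (List.length_eq_zero_iff.1 hl.symm).symm ▸ rfl
  | cons a u ih =>
    intro v hu hv hl ho
    cases v with
    | nil => simp at hl
    | cons b v =>
      have hu' : ∀ c ∈ u, c = 1 ∨ c = 2 := fun c hc => hu c (mem_cons_of_mem a hc)
      have hv' : ∀ c ∈ v, c = 1 ∨ c = 2 := fun c hc => hv c (mem_cons_of_mem b hc)
      have hl' : u.length = v.length := by simpa using hl
      rcases hu a mem_cons_self with h1 | h1 <;> rcases hv b mem_cons_self with h2 | h2 <;>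
        subst h1 <;> subst h2
      · rw [onesL_one, onesL_one] at ho
        rw [ih v hu' hv' hl' (by injection ho)]
      · exfalso
        rw [onesL_one, onesL_two] at ho
        cases hoe : onesL v with
        | nil => rw [hoe] at ho; simp at ho
        | cons x l => rw [hoe] at ho; simp at ho
      · exfalso
        rw [onesL_two, onesL_one] at ho
        cases hoe : onesL u with
        | nil => rw [hoe] at ho; simp at ho
        | cons x l => rw [hoe] at ho; simp at ho
      · rw [onesL_two, onesL_two] at ho
        have : onesL u = onesL v :=
          List.map_injective_iff.2 (add_left_injective 1) ho
        rw [ih v hu' hv' hl' this]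

lemma count0_eq_zero {u : List (Fin 3)} (hu : ∀ c ∈ u, c = 1 ∨ c = 2) : u.count 0 = 0 := by
  refine List.count_eq_zero.2 ?_
  intro hmem
  rcases hu 0 hmem with h | h <;> exact absurd h (by decide)

end Dev2

section Dev3
open List

/-- `rl a k s` is the list `[a, a+k, a+k+(k+1), ...]` of length `s`. -/
def rl : ℕ → ℕ → ℕ → List ℕ
  | _, _, 0 => []
  | a, k, s + 1 => a :: rl (a + k) (k + 1) s

/-- Triangular numbers: `trg m = m*(m-1)/2`. -/
def trg : ℕ → ℕ
  | 0 => 0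
  | m + 1 => trg m + m

lemma rl_length : ∀ s a k, (rl a k s).length = s := by
  intro s
  induction s with
  | zero => intro a k; rfl
  | succ s ih => intro a k; simp [rl, ih]

lemma rl_map_add : ∀ s a k c, (rl a k s).map (· + c) = rl (a + c) k s := by
  intro s
  induction s with
  | zero => intro a k c; rfl
  | succ s ih =>
    intro a k c
    rw [rl, rl, List.map_cons, ih]
    congr 2
    omega

lemma rl_append : ∀ s a k, rl a k (s + 1) = rl a k s ++ [a + s * k + trg s] := by
  intro s
  induction s with
  | zero => intro a k; simp [rl, trg]
  | succ s ih =>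
    intro a k
    rw [show rl a k (s + 1 + 1) = a :: rl (a + k) (k + 1) (s + 1) from rfl, ih,
      show rl a k (s + 1) = a :: rl (a + k) (k + 1) s from rfl]
    simp only [List.cons_append]
    congr 3
    rw [trg]
    ring

lemma rl_drop : ∀ t s a k, t ≤ s → (rl a k s).drop t = rl (a + t * k + trg t) (k + t) (s - t) := by
  intro t
  induction t with
  | zero => intro s a k _; simp [trg]
  | succ t ih =>
    intro s a k hts
    cases s with
    | zero => omega
    | succ s =>
      rw [rl, List.drop_succ_cons, ih s (a + k) (k + 1) (by omega)]
      have e1 : a + k + t * (k + 1) + trg t = a + (t + 1) * k + trg (t + 1) := by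
        rw [trg]; ring
      have e2 : k + 1 + t = k + (t + 1) := by omega
      have e3 : s - t = s + 1 - (t + 1) := by omega
      rw [e1, e2, e3]

lemma rl_take : ∀ p s a k, (rl a k s).take p = rl a k (min p s) := by
  intro p
  induction p with
  | zero => intro s a k; simp [rl]
  | succ p ih =>
    intro s a k
    cases s with
    | zero => simp [rl]
    | succ s =>
      rw [rl, List.take_succ_cons, ih, Nat.succ_min_succ, rl]

lemma rl_sum : ∀ s a k, 6 * ((rl a k s).sum : ℤ) =
    6 * (a:ℤ) * (s:ℤ) + 3 * (k:ℤ) * (s:ℤ) * ((s:ℤ) - 1) + (s:ℤ) * ((s:ℤ) - 1) * ((s:ℤ) - 2) := by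
  intro s
  induction s with
  | zero => intro a k; simp [rl]
  | succ s ih =>
    intro a k
    rw [rl, List.sum_cons]
    have h := ih (a + k) (k + 1)
    push_cast at h ⊢
    linear_combination h

/-- Sum of squares of a list of naturals. -/
def sq2 (l : List ℕ) : ℕ := (l.map (fun r => r * r)).sum

lemma sq2_nil : sq2 [] = 0 := rfl

lemma sq2_cons (x : ℕ) (l : List ℕ) : sq2 (x :: l) = x * x + sq2 l := by
  simp [sq2]

lemma rl_sqsum : ∀ s a k, 120 * (sq2 (rl a k s) : ℤ) =
    6*(s:ℤ)^5 - 30*(s:ℤ)^4 + 50*(s:ℤ)^3 - 30*(s:ℤ)^2 + 4*(s:ℤ)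
      + (k:ℤ)*(30*(s:ℤ)^4 - 100*(s:ℤ)^3 + 90*(s:ℤ)^2 - 20*(s:ℤ))
      + (k:ℤ)^2*(40*(s:ℤ)^3 - 60*(s:ℤ)^2 + 20*(s:ℤ))
      + (a:ℤ)*(40*(s:ℤ)^3 - 120*(s:ℤ)^2 + 80*(s:ℤ))
      + (a:ℤ)*(k:ℤ)*(120*(s:ℤ)^2 - 120*(s:ℤ)) + 120*(a:ℤ)^2*(s:ℤ) := by
  intro s
  induction s with
  | zero => intro a k; simp [rl, sq2]
  | succ s ih =>
    intro a k
    rw [rl, sq2_cons]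
    have h := ih (a + k) (k + 1)
    push_cast at h ⊢
    linear_combination h

lemma rl_inj (a k b l s : ℕ)
    (h1 : (rl a k s).sum = (rl b l s).sum)
    (h2 : sq2 (rl a k s) = sq2 (rl b l s)) :
    rl a k s = rl b l s := by
  rcases s with _ | _ | s''
  · rfl
  · have hab : a = b := by simpa [rl] using h1
    simp [rl, hab]
  · set n : ℕ := s'' + 1 + 1 with hn
    have hn2 : 2 ≤ n := by omega
    have hs2 : (2 : ℤ) ≤ (n : ℤ) := by exact_mod_cast hn2
    have e1 : 6 * ((rl a k n).sum : ℤ) = 6 * ((rl b l n).sum : ℤ) := by rw [h1]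
    have e2 : 120 * (sq2 (rl a k n) : ℤ) = 120 * (sq2 (rl b l n) : ℤ) := by rw [h2]
    rw [rl_sum, rl_sum] at e1
    rw [rl_sqsum, rl_sqsum] at e2
    set S : ℤ := ((n : ℕ) : ℤ) with hS
    have hC : 2 * (a : ℤ) - 2 * b = (S - 1) * ((l : ℤ) - k) := by
      have h3 : (3 * S) * (2 * (a:ℤ) + (k:ℤ) * (S - 1))
          = (3 * S) * (2 * (b:ℤ) + (l:ℤ) * (S - 1)) := by linear_combination e1
      have hs0 : (3 * S) ≠ 0 := by intro hh; rw [hS] at hh; nlinarith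
      have h4 := mul_left_cancel₀ hs0 h3
      linear_combination h4
    have key : (10 * S * (S^2 - 1)) * (((l:ℤ) - k) * ((k:ℤ) + l + S - 2)) = 0 := by
      linear_combination (20*S*(S-1)*(S-2) + 30*S*(S-1)*((k:ℤ)+l)
        + 60*S*((a:ℤ)+b)) * hC - e2
    have hpos : (0:ℤ) < 10 * S * (S^2 - 1) := by nlinarith
    have hfac := (mul_eq_zero.1 key).resolve_left hpos.ne'
    have hk0 : (0:ℤ) ≤ (k:ℤ) := Int.natCast_nonneg k
    have hl0 : (0:ℤ) ≤ (l:ℤ) := Int.natCast_nonneg l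
    have hlk : (l : ℤ) = k := by
      rcases mul_eq_zero.1 hfac with h | h
      · linarith
      · have hk' : (k:ℤ) = 0 := by linarith
        have hl' : (l:ℤ) = 0 := by linarith
        rw [hk', hl']
    have hab : (a : ℤ) = b := by
      rw [hlk] at hC
      simp at hC
      linarith
    have hab' : a = b := by exact_mod_cast hab
    have hkl' : l = k := by exact_mod_cast hlk
    rw [hab', hkl']

end Dev3

section Dev4
open List

/-- The `m`-th block `1 2^m`. -/
def blkW (m : ℕ) : List (Fin 3) := 1 :: List.replicate m 2

/-- `tlW m` = concatenation of blocks `blkW 0, ..., blkW (m-1)`. -/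
def tlW : ℕ → List (Fin 3)
  | 0 => []
  | m + 1 => tlW m ++ blkW m

/-- Prefixes of the fixed point: `wdW m = 0 · tlW m`. -/
def wdW (m : ℕ) : List (Fin 3) := 0 :: tlW m

lemma mem_tlW : ∀ m, ∀ c ∈ tlW m, c = 1 ∨ c = 2 := by
  intro m
  induction m with
  | zero => intro c hc; simp [tlW] at hc
  | succ m ih =>
    intro c hc
    rw [tlW] at hc
    rcases List.mem_append.1 hc with h | h
    · exact ih c h
    · rcases List.mem_cons.1 h with h' | h'
      · exact Or.inl h'
      · exact Or.inr (List.eq_of_mem_replicate h')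

lemma onesL_replicate2 (m : ℕ) : onesL (List.replicate m 2) = [] := by
  induction m with
  | zero => rfl
  | succ m ih => rw [List.replicate_succ, onesL_two, ih]; rfl

lemma onesL_blkW (m : ℕ) : onesL (blkW m) = [0] := by
  rw [blkW, onesL_one, onesL_replicate2]

lemma count2_blkW (m : ℕ) : (blkW m).count 2 = m := by
  simp [blkW, List.count_cons, List.count_replicate]

lemma map_add_add (l : List ℕ) (c d : ℕ) : (l.map (· + c)).map (· + d) = l.map (· + (c + d)) := by
  rw [List.map_map]
  exact List.map_congr_left (fun x _ => by simp; omega)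

lemma onesL_append (u v : List (Fin 3)) (hu : ∀ c ∈ u, c = 1 ∨ c = 2) :
    onesL (u ++ v) = onesL u ++ (onesL v).map (· + u.count 2) := by
  induction u with
  | nil => simp [onesL]
  | cons a u ih =>
    have hu' : ∀ c ∈ u, c = 1 ∨ c = 2 := fun c hc => hu c (mem_cons_of_mem a hc)
    rcases hu a mem_cons_self with h | h <;> subst h
    · rw [List.cons_append, onesL_one, onesL_one, ih hu']
      simp [List.count_cons]
    · rw [List.cons_append, onesL_two, onesL_two, ih hu', List.map_append, map_add_add]
      simp [List.count_cons]

lemma onesL_tlW : ∀ m, onesL (tlW m) = rl 0 0 m ∧ (tlW m).count 2 = trg m := by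
  intro m
  induction m with
  | zero => exact ⟨rfl, rfl⟩
  | succ m ih =>
    constructor
    · rw [tlW, onesL_append _ _ (mem_tlW m), onesL_blkW, ih.1, ih.2, rl_append]
      simp
    · rw [tlW, List.count_append, ih.2, count2_blkW, trg]

lemma factor_shape (m i n : ℕ) :
    ∃ a k s, onesL (((tlW m).drop i).take n) = rl a k s := by
  set v := (tlW m).drop i with hv
  have hvm : ∀ c ∈ v, c = 1 ∨ c = 2 :=
    fun c hc => mem_tlW m c ((List.drop_sublist i (tlW m)).mem hc)
  have h1 : ∃ A K SS, onesL v = rl A K SS := by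
    have htk : ∀ c ∈ (tlW m).take i, c = 1 ∨ c = 2 :=
      fun c hc => mem_tlW m c ((List.take_sublist i (tlW m)).mem hc)
    have happ := onesL_append ((tlW m).take i) v htk
    rw [hv, List.take_append_drop, (onesL_tlW m).1] at happ
    set c := ((tlW m).take i).count 2 with hc
    set t := (onesL ((tlW m).take i)).length with ht
    have hdrop : (rl 0 0 m).drop t = (onesL v).map (· + c) := by
      rw [happ]
      exact List.drop_left
    have htm : t ≤ m := by
      have : ((rl 0 0 m).drop t).length = (rl 0 0 m).length - t := by simp
      have h2 := congrArg List.length happ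
      simp only [List.length_append, rl_length] at h2
      omega
    rw [rl_drop t m 0 0 htm] at hdrop
    simp only [Nat.zero_add, Nat.mul_zero, Nat.zero_mul, Nat.add_zero] at hdrop
    rcases hmt : m - t with _ | w
    · rw [hmt] at hdrop
      have : (onesL v).map (· + c) = [] := by rw [← hdrop]; rfl
      have : onesL v = [] := by simpa using this
      exact ⟨0, 0, 0, by rw [this]; rfl⟩
    · rw [hmt] at hdrop
      have hlen : (onesL v).length = w + 1 := by
        have := congrArg List.length hdrop
        simp [rl_length] at this
        omega
      have hc_le : c ≤ trg t := by
        cases hov : onesL v with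
        | nil => rw [hov] at hlen; simp at hlen
        | cons x xs =>
          rw [hov] at hdrop
          rw [show rl (trg t) t (w+1) = trg t :: rl (trg t + t) (t+1) w from rfl] at hdrop
          simp at hdrop
          omega
      refine ⟨trg t - c, t, w + 1, ?_⟩
      have hmap : (rl (trg t - c) t (w + 1)).map (· + c) = (onesL v).map (· + c) := by
        rw [rl_map_add, ← hdrop]
        congr 2
        omega
      have hinj : Function.Injective (· + c : ℕ → ℕ) := add_left_injective c
      exact (List.map_injective_iff.2 hinj hmap).symm
  obtain ⟨A, K, SS, h1⟩ := h1
  have h2 := onesL_append (v.take n) (v.drop n)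
    (fun c hc => hvm c ((List.take_sublist n v).mem hc))
  rw [List.take_append_drop, h1] at h2
  have h3 : onesL (v.take n) = (rl A K SS).take (onesL (v.take n)).length := by
    rw [h2, List.take_left]
  rw [rl_take] at h3
  exact ⟨A, K, _, h3⟩

end Dev4

section Dev5
open List

lemma len_tlW (m : ℕ) : m ≤ (tlW m).length := by
  induction m with
  | zero => simp
  | succ m ih => rw [tlW]; simp [blkW]

lemma lt_len_wdW (m : ℕ) : m < (wdW m).length := by
  have := len_tlW m
  simp [wdW]
  omega

lemma wdW_succ (m : ℕ) : wdW (m + 1) = wdW m ++ blkW m := rfl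

lemma wdW_prefix {m m' : ℕ} (h : m ≤ m') : wdW m <+: wdW m' := by
  induction m', h using Nat.le_induction with
  | base => exact List.prefix_rfl
  | succ m' hm ih => exact ih.trans ⟨blkW m', (wdW_succ m').symm⟩

/-- The fixed point of `μ` as an infinite word. -/
def HwF (n : ℕ) : Fin 3 := (wdW (n + 1)).getD n 2

lemma getD_wdW (m n : ℕ) (hn : n < (wdW m).length) : (wdW m).getD n 2 = HwF n := by
  rcases le_total (n + 1) m with hc | hc
  · obtain ⟨t, ht⟩ := wdW_prefix hc
    rw [HwF, ← ht, List.getD_append _ _ _ _ (Nat.lt_of_lt_of_le (Nat.lt_succ_self n)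
      (Nat.le_of_lt_succ (Nat.lt_succ_of_lt (lt_len_wdW (n+1)))))]
  · obtain ⟨t, ht⟩ := wdW_prefix hc
    rw [HwF, ← ht, List.getD_append _ _ _ _ hn]

lemma pre_getD (x : ℕ → Fin 3) (L n : ℕ) (hn : n < L) : (pre x L).getD n 2 = x n := by
  rw [pre, List.getD_eq_getElem _ _ (by simpa using hn)]
  simp

lemma pre_eq_take (m n : ℕ) (h : n ≤ (wdW m).length) : pre HwF n = (wdW m).take n := by
  apply List.ext_getElem
  · simp only [pre, List.length_map, List.length_range, List.length_take]
    omega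
  · intro j h1 h2
    have hj : j < n := by simpa [pre] using h1
    have hjw : j < (wdW m).length := by omega
    simp only [pre, List.getElem_map, List.getElem_range, List.getElem_take]
    rw [← List.getD_eq_getElem _ 2 hjw, getD_wdW m j hjw]

lemma prefix_pre {p : List (Fin 3)} {m : ℕ} (hp : p <+: wdW m) : p = pre HwF p.length := by
  have hl : p.length ≤ (wdW m).length := hp.length_le
  rw [pre_eq_take m p.length hl]
  exact List.prefix_iff_eq_take.1 hp

lemma mAp_cons {A B : Type*} (f : A → List B) (a : A) (u : List A) :
    mAp f (a :: u) = f a ++ mAp f u := by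
  simp [mAp]

lemma mAp_append {A B : Type*} (f : A → List B) (u v : List A) :
    mAp f (u ++ v) = mAp f u ++ mAp f v := by
  simp [mAp]

lemma mAp_replicate2 (m : ℕ) : mAp mu (List.replicate m 2) = List.replicate m 2 := by
  induction m with
  | zero => rfl
  | succ m ih =>
    rw [List.replicate_succ, mAp_cons, ih]
    rfl

lemma mAp_blkW (m : ℕ) : mAp mu (blkW m) = blkW (m + 1) := by
  rw [blkW, mAp_cons, mAp_replicate2]
  rfl

lemma mAp_wdW : ∀ m, mAp mu (wdW m) = wdW (m + 1) := by
  intro m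
  induction m with
  | zero => rfl
  | succ m ih =>
    rw [wdW_succ, mAp_append, ih, mAp_blkW]
    rfl

lemma mAp_length (u : List (Fin 3)) : u.length ≤ (mAp mu u).length := by
  induction u with
  | nil => simp [mAp]
  | cons a u ih =>
    rw [mAp_cons, List.length_append, List.length_cons]
    have h1 : 1 ≤ (mu a).length := by
      fin_cases a <;> simp [mu]
    omega

lemma fixpoint_HwF (n : ℕ) :
    mAp mu (pre HwF n) = pre HwF (mAp mu (pre HwF n)).length := by
  have h1 : pre HwF n = (wdW n).take n := pre_eq_take n n (le_of_lt (lt_len_wdW n))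
  have hpre : pre HwF n <+: wdW n := h1 ▸ List.take_prefix n (wdW n)
  obtain ⟨t, ht⟩ := hpre
  have : mAp mu (pre HwF n) <+: wdW (n + 1) :=
    ⟨mAp mu t, by rw [← mAp_append, ht, mAp_wdW]⟩
  exact prefix_pre this

lemma count0_pre (n : ℕ) : 0 < (pre HwF (n + 1)).count 0 := by
  rw [pre, List.range_succ_eq_map, List.map_cons]
  have h0 : HwF 0 = 0 := rfl
  rw [h0, List.count_cons]
  simp

lemma occ_eq (i n m : ℕ) (h : i + n ≤ (wdW m).length) :
    (List.range n).map (fun j => HwF (i + j)) = ((wdW m).drop i).take n := by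
  apply List.ext_getElem
  · simp
    omega
  · intro j h1 h2
    have hj : j < n := by simpa using h1
    have hjw : i + j < (wdW m).length := by omega
    simp only [List.getElem_map, List.getElem_range, List.getElem_take, List.getElem_drop]
    rw [← List.getD_eq_getElem _ 2 hjw, getD_wdW m _ hjw]

lemma fac_cases {u : List (Fin 3)} {n : ℕ} (hu : u ∈ Fac HwF n) :
    u = pre HwF n ∨ ((∀ c ∈ u, c = 1 ∨ c = 2) ∧ ∃ a k s, onesL u = rl a k s) := by
  obtain ⟨hlen, i, hocc⟩ := hu
  rw [OccursAt, hlen] at hocc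
  set m := i + n + 1 with hm
  have hmle : i + n ≤ (wdW m).length := by
    have := lt_len_wdW m
    omega
  have hu2 : u = ((wdW m).drop i).take n := by rw [hocc]; exact occ_eq i n m hmle
  cases i with
  | zero =>
    left
    rw [hu2, List.drop_zero]
    exact (pre_eq_take m n (by omega)).symm
  | succ i' =>
    right
    have hdw : (wdW m).drop (i' + 1) = (tlW m).drop i' := rfl
    rw [hu2, hdw]
    constructor
    · intro c hc
      exact mem_tlW m c (((List.take_sublist _ _).trans (List.drop_sublist _ _)).mem hc)
    · exact factor_shape m i' n

end Dev5

theorem mu_fixed_point_3binomial_eq_factor_complexity (h : ℕ → Fin 3) (h0 : h 0 = 0)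
    (hfix : InfMapsTo mu h h) :
    ∀ n : ℕ, bc h 3 n = fc h n := by
  have hH : ∀ n, h n = HwF n := by
    intro n
    induction n using Nat.strong_induction_on with
    | _ n ih =>
      cases n with
      | zero => rw [h0]; rfl
      | succ n' =>
        have hpre : pre h (n' + 1) = pre HwF (n' + 1) :=
          List.map_congr_left (fun j hj => ih j (List.mem_range.1 hj))
        have hfix1 := hfix.1 (n' + 1)
        rw [hpre] at hfix1
        have hlen : n' + 1 < (mAp mu (pre HwF (n' + 1))).length := by
          rw [pre, List.range_succ_eq_map, List.map_cons, mAp_cons]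
          have h00 : HwF 0 = 0 := rfl
          rw [h00, List.length_append]
          have h2 : (mu 0).length = 2 := rfl
          have h3 := mAp_length ((List.range n').map Nat.succ |>.map HwF)
          simp only [List.length_map, List.length_range] at h3
          omega
        have hfp := fixpoint_HwF (n' + 1)
        have e1 : (pre h (mAp mu (pre HwF (n' + 1))).length).getD (n' + 1) 2 = h (n' + 1) :=
          pre_getD h _ _ hlen
        have e2 : (pre HwF (mAp mu (pre HwF (n' + 1))).length).getD (n' + 1) 2 = HwF (n' + 1) :=
          pre_getD HwF _ _ hlen
        rw [← hfix1] at e1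
        rw [← hfp] at e2
        exact e1.symm.trans e2
  have hfun : h = HwF := funext hH
  subst hfun
  intro n
  have hinj : Set.InjOn (Quotient.mk (binSetoid (Fin 3) 3)) (Fac HwF n) := by
    intro u hu v hv hq
    have heq : BinEquiv 3 u v := Quotient.exact hq
    have hlu : u.length = n := hu.1
    have hlv : v.length = n := hv.1
    have e0 := heq [0] (by simp)
    have e1 := heq [1] (by simp)
    have e21 := heq [2, 1] (by simp)
    have e221 := heq [2, 2, 1] (by simp)
    rw [wordBinom_single, wordBinom_single] at e0
    rcases fac_cases hu with h1 | ⟨hu12, a, k, s, hou⟩ <;>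
      rcases fac_cases hv with h2 | ⟨hv12, b, l, s', hov⟩
    · rw [h1, h2]
    · cases n with
      | zero => rw [List.length_eq_zero_iff.1 hlu, List.length_eq_zero_iff.1 hlv]
      | succ n' =>
        exfalso
        have hcu : 0 < u.count 0 := h1 ▸ count0_pre n'
        have hcv : v.count 0 = 0 := count0_eq_zero hv12
        omega
    · cases n with
      | zero => rw [List.length_eq_zero_iff.1 hlu, List.length_eq_zero_iff.1 hlv]
      | succ n' =>
        exfalso
        have hcv : 0 < v.count 0 := h2 ▸ count0_pre n'
        have hcu : u.count 0 = 0 := count0_eq_zero hu12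
        omega
    · have hs : s = s' := by
        have e1' := e1
        rw [wb1_eq, wb1_eq, hou, hov, rl_length, rl_length] at e1'
        exact e1'
      subst hs
      have hsum : (rl a k s).sum = (rl b l s).sum := by
        have e21' := e21
        rw [wb21_eq u hu12, wb21_eq v hv12, hou, hov] at e21'
        exact e21'
      have hsq : sq2 (rl a k s) = sq2 (rl b l s) := by
        have h221 : 2 * wordBinom u [2, 2, 1] + wordBinom u [2, 1]
            = 2 * wordBinom v [2, 2, 1] + wordBinom v [2, 1] := by rw [e221, e21]
        rw [wb221_eq u hu12, wb221_eq v hv12, hou, hov] at h221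
        exact h221
      have hone : onesL u = onesL v := by rw [hou, hov, rl_inj a k b l s hsum hsq]
      exact onesL_inj u v hu12 hv12 (by rw [hlu, hlv]) hone
  exact Set.ncard_image_of_injOn hinj
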